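/- arXiv:2204.05142 — 2 statements merged into one kernel-verified Lean document; each statement's English description precedes it below -/
import Mathlib

section
/- In a Coxeter group W, if w₀ is the element of minimal length in the double coset W_X · w · W_Y, then every element v of this double coset can be written as v = u₁ · w₀ · u₂ with u₁ ∈ W_X, u₂ ∈ W_Y, and ℓ_S(v) = ℓ_S(u₁) + ℓ_S(w₀) + ℓ_S(u₂). -/
open CoxeterSystem

/-- The standard parabolic subgroup `W_X` of a Coxeter group. -/
def coxParabolic {B W : Type*} [Group W] {M : CoxeterMatrix B} (cs : CoxeterSystem M W)
    (X : Set B) : Subgroup W :=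
  Subgroup.closure (cs.simple '' X)

noncomputable section

namespace CoxAux

open List

variable {B W : Type*} [Group W] {M : CoxeterMatrix B} (cs : CoxeterSystem M W)

local prefix:100 "s" => cs.simple
local prefix:100 "π" => cs.wordProd
local prefix:100 "ℓ" => cs.length

open Classical in
/-- The Tits involution on `W × ℤˣ` associated to a simple reflection. -/
def fP (i : B) : Equiv.Perm (W × ℤˣ) :=
  Function.Involutive.toPerm
    (fun p => (s i * p.1 * s i, if p.1 = s i then -p.2 else p.2))
    (by
      rintro ⟨t, ε⟩
      by_cases h : t = s i
      · simp [h, cs.simple_mul_simple_cancel_left, cs.simple_mul_simple_self]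
      · have h2 : s i * t * s i ≠ s i := by
          intro hc
          apply h
          calc t = s i * (s i * t * s i) * s i := by
                simp [← mul_assoc, cs.simple_mul_simple_self]
            _ = s i * s i * s i := by rw [hc]
            _ = s i := by rw [cs.simple_mul_simple_self, one_mul]
        simp only [h2, if_neg, h, if_neg, ← mul_assoc]
        simp [mul_assoc, cs.simple_mul_simple_cancel_left, cs.simple_mul_simple_cancel_right])

open Classical in
lemma fP_apply (i : B) (t : W) (ε : ℤˣ) :
    fP cs i (t, ε) = (s i * t * s i, if t = s i then -ε else ε) := rfl

open Classical in
/-- The sign of `t` relative to the right inversion sequence of `ω`. -/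
def eta (t : W) (ω : List B) : ℤˣ :=
  ((cs.rightInvSeq ω).map (fun x => if x = t then (-1 : ℤˣ) else 1)).prod

lemma eta_nil (t : W) : eta cs t [] = 1 := rfl

open Classical in
lemma eta_cons (t : W) (i : B) (ω : List B) :
    eta cs t (i :: ω) =
      (if (π ω)⁻¹ * s i * π ω = t then (-1 : ℤˣ) else 1) * eta cs t ω := by
  simp [eta, CoxeterSystem.rightInvSeq]

open Classical in
lemma prod_fP_apply (ω : List B) (t : W) (ε : ℤˣ) :
    (ω.map (fP cs)).prod (t, ε) = (π ω * t * (π ω)⁻¹, ε * eta cs t ω) := by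
  induction ω with
  | nil => simp [eta_nil]
  | cons i ω ih =>
    rw [List.map_cons, List.prod_cons, Equiv.Perm.mul_apply, ih, fP_apply,
      eta_cons, cs.wordProd_cons]
    simp only [Prod.mk.injEq]
    have hcond : (π ω * t * (π ω)⁻¹ = s i) ↔ ((π ω)⁻¹ * s i * π ω = t) := by
      constructor
      · intro h; rw [← h]; group
      · intro h; rw [← h]; group
    constructor
    · rw [mul_inv_rev, cs.inv_simple]
      group
    · by_cases h : (π ω)⁻¹ * s i * π ω = t
      · rw [if_pos (hcond.mpr h), if_pos h]; simp
      · rw [if_neg (fun hc => h (hcond.mp hc)), if_neg h]; rw [one_mul]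

lemma wordProd_alternatingWord_two_mul (i i' : B) (m : ℕ) (hm : (s i * s i') ^ m = 1) :
    π (alternatingWord i i' (2 * m)) = 1 := by
  rw [cs.prod_alternatingWord_eq_mul_pow]
  have : Even (2 * m) := even_two_mul m
  rw [if_pos this]
  simp [Nat.mul_div_cancel_left m (by norm_num : 0 < 2), hm]

lemma drop_alternatingWord (i i' : B) (n k : ℕ) :
    (alternatingWord i i' n).drop k = alternatingWord i i' (n - k) := by
  induction n generalizing k with
  | zero => simp [alternatingWord]
  | succ n ih =>
    cases k with
    | zero => simp
    | succ k =>
      rw [alternatingWord_succ' i i' n, List.drop_succ_cons, ih k]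
      congr 1
      omega

lemma getD_rightInvSeq_alternatingWord (i i' : B) (n j : ℕ) (hj : j < n) :
    (cs.rightInvSeq (alternatingWord i i' n)).getD j 1 =
      (π (alternatingWord i i' (n - j - 1)))⁻¹ * π (alternatingWord i i' (n - j)) := by
  have hdrop : (alternatingWord i i' n).drop (j + 1) = alternatingWord i i' (n - j - 1) := by
    rw [drop_alternatingWord, Nat.sub_sub]
  have hnj : n - j = (n - j - 1) + 1 := by omega
  have hsucc : alternatingWord i i' (n - j) =
      (if Even (n - j - 1) then i' else i) :: alternatingWord i i' (n - j - 1) := by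
    rw [hnj]
    exact alternatingWord_succ' i i' (n - j - 1)
  have hget : (alternatingWord i i' n)[j]? = some (if Even (n - j - 1) then i' else i) := by
    have h0 : (alternatingWord i i' n)[j]? = ((alternatingWord i i' n).drop j)[0]? := by
      rw [List.getElem?_drop, Nat.add_zero]
    rw [h0, drop_alternatingWord, hsucc]
    simp
  rw [cs.getD_rightInvSeq, hdrop, hget]
  rw [mul_assoc]
  congr 1
  rw [hsucc, cs.wordProd_cons]
  rfl

lemma key_comm (i i' : B) (j : ℕ) :
    s i' * (s i * s i') ^ j = ((s i * s i') ^ j)⁻¹ * s i' := by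
  induction j with
  | zero => simp
  | succ j ih =>
    have hstep : s i' * (s i * s i') = (s i * s i')⁻¹ * s i' := by
      rw [mul_inv_rev, cs.inv_simple, cs.inv_simple, ← mul_assoc]
    calc s i' * (s i * s i') ^ (j + 1)
        = (s i' * (s i * s i') ^ j) * (s i * s i') := by rw [pow_succ, mul_assoc]
      _ = ((s i * s i') ^ j)⁻¹ * (s i' * (s i * s i')) := by rw [ih, mul_assoc]
      _ = ((s i * s i') ^ j)⁻¹ * ((s i * s i')⁻¹ * s i') := by rw [hstep]
      _ = ((s i * s i') ^ (j + 1))⁻¹ * s i' := by simp [pow_succ', mul_inv_rev, mul_assoc]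

lemma h_formula (i i' : B) (k : ℕ) :
    (π (alternatingWord i i' k))⁻¹ * π (alternatingWord i i' (k + 1)) =
      ((s i * s i') ^ k)⁻¹ * s i' := by
  rw [cs.prod_alternatingWord_eq_mul_pow, cs.prod_alternatingWord_eq_mul_pow]
  by_cases hk : Even k
  · have h1 : ¬ Even (k + 1) := by simp [Nat.even_add_one, hk]
    have hk' : k % 2 = 0 := Nat.even_iff.mp hk
    have h2 : (k + 1) / 2 = k / 2 := by omega
    rw [if_pos hk, if_neg h1, h2, one_mul, key_comm, ← mul_assoc, ← mul_inv_rev, ← pow_add]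
    congr 3
    omega
  · have h1 : Even (k + 1) := by simp [Nat.even_add_one, hk]
    have hk' : k % 2 = 1 := Nat.odd_iff.mp (Nat.not_even_iff_odd.mp hk)
    have h2 : (k + 1) / 2 = k / 2 + 1 := by omega
    rw [if_neg hk, if_pos h1, h2, one_mul, mul_inv_rev, cs.inv_simple, mul_assoc,
      key_comm, ← mul_assoc, ← mul_inv_rev, ← pow_add]
    congr 3
    omega

open Classical in
lemma eta_alternatingWord (i i' : B) (t : W) :
    eta cs t (alternatingWord i i' (2 * M i i')) = 1 := by
  set m := M i i' with hm
  set ω := alternatingWord i i' (2 * m) with hω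
  have hlenω : ω.length = 2 * m := by rw [hω, length_alternatingWord]
  have hlen : (cs.rightInvSeq ω).length = 2 * m := by
    rw [cs.length_rightInvSeq, hlenω]
  have hent : ∀ j < 2 * m, (cs.rightInvSeq ω).getD j 1 =
      ((s i * s i') ^ (2 * m - j - 1))⁻¹ * s i' := by
    intro j hj
    rw [getD_rightInvSeq_alternatingWord cs i i' (2 * m) j hj]
    have hnj : 2 * m - j - 1 + 1 = 2 * m - j := by omega
    have hrw := h_formula cs i i' (2 * m - j - 1)
    rw [hnj] at hrw
    exact hrw
  have hpm : (s i * s i') ^ m = 1 := cs.simple_mul_simple_pow i i'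
  have htd : (cs.rightInvSeq ω).take m = (cs.rightInvSeq ω).drop m := by
    apply List.ext_getElem
    · rw [List.length_take, List.length_drop, hlen]
      omega
    · intro k h1 h2
      rw [List.length_take, hlen] at h1
      have hk : k < m := lt_min_iff.mp h1 |>.1
      rw [List.getElem_take, List.getElem_drop]
      rw [← List.getD_eq_getElem _ 1, ← List.getD_eq_getElem _ 1]
      rw [hent k (by omega), hent (m + k) (by omega)]
      congr 2
      have he : 2 * m - k - 1 = (m - k - 1) + m := by omega
      have he2 : 2 * m - (m + k) - 1 = m - k - 1 := by omega
      rw [he, he2, pow_add, hpm, mul_one]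
  rw [eta]
  have hsplit : cs.rightInvSeq ω =
      (cs.rightInvSeq ω).take m ++ (cs.rightInvSeq ω).drop m :=
    (List.take_append_drop m _).symm
  rw [hsplit, List.map_append, List.prod_append, ← htd]
  exact Int.units_mul_self _

lemma prod_map_fP_alternatingWord (i i' : B) (m : ℕ) :
    ((alternatingWord i i' (2 * m)).map (fP cs)).prod = (fP cs i * fP cs i') ^ m := by
  induction m with
  | zero => simp [alternatingWord]
  | succ m ih =>
    have h2 : 2 * (m + 1) = (2 * m + 1) + 1 := by omega
    rw [h2, alternatingWord_succ', alternatingWord_succ']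
    rw [if_neg (by simp [Nat.even_add_one]), if_pos (even_two_mul m)]
    rw [List.map_cons, List.map_cons, List.prod_cons, List.prod_cons, ih, pow_succ',
      mul_assoc]

lemma isLiftable_fP : CoxeterMatrix.IsLiftable M (fP cs) := by
  intro i i'
  rw [← prod_map_fP_alternatingWord]
  apply Equiv.ext
  rintro ⟨t, ε⟩
  rw [prod_fP_apply, wordProd_alternatingWord_two_mul cs i i' (M i i')
    (cs.simple_mul_simple_pow i i'), eta_alternatingWord]
  simp

/-- The Tits permutation representation. -/
def titsRep : W →* Equiv.Perm (W × ℤˣ) :=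
  cs.lift ⟨fP cs, isLiftable_fP cs⟩

lemma titsRep_wordProd (ω : List B) : titsRep cs (π ω) = (ω.map (fP cs)).prod := by
  induction ω with
  | nil => simp [cs.wordProd_nil]
  | cons i ω ih =>
    rw [cs.wordProd_cons, map_mul, ih, List.map_cons, List.prod_cons]
    congr 1
    exact cs.lift_apply_simple (isLiftable_fP cs) i

lemma eta_eq_of_wordProd_eq {ω ω' : List B} (h : π ω = π ω') (t : W) :
    eta cs t ω = eta cs t ω' := by
  have h1 := prod_fP_apply cs ω t 1
  have h2 := prod_fP_apply cs ω' t 1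
  rw [← titsRep_wordProd, h, titsRep_wordProd] at h1
  rw [h2] at h1
  have := congrArg Prod.snd h1
  simpa using this.symm

open Classical in
lemma eta_simple_self (i : B) (ω : List B) (h : π ω = s i) : eta cs (s i) ω = -1 := by
  have : eta cs (s i) ω = eta cs (s i) [i] := eta_eq_of_wordProd_eq cs (by simp [h]) _
  rw [this, eta_cons, eta_nil]
  simp

lemma rightInvSeq_append (α β : List B) :
    cs.rightInvSeq (α ++ β) =
      (cs.rightInvSeq α).map (fun x => (π β)⁻¹ * x * π β) ++ cs.rightInvSeq β := by
  induction α with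
  | nil => simp
  | cons a α ih =>
    rw [List.cons_append]
    show ((π (α ++ β))⁻¹ * s a * π (α ++ β)) :: cs.rightInvSeq (α ++ β) = _
    rw [ih]
    show _ = ((π β)⁻¹ * ((π α)⁻¹ * s a * π α) * π β) :: _
    congr 1
    rw [cs.wordProd_append, mul_inv_rev]
    group

open Classical in
lemma simple_mem_rightInvSeq {ω : List B} (hred : cs.IsReduced ω) (i : B)
    (h : ℓ (π ω * s i) < ℓ (π ω)) : s i ∈ cs.rightInvSeq ω := by
  by_contra hmem
  have h1 : eta cs (s i) ω = 1 := by
    apply List.prod_eq_one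
    intro x hx
    obtain ⟨y, hy, rfl⟩ := List.mem_map.mp hx
    apply if_neg
    intro hc
    rw [hc] at hy
    exact hmem hy
  obtain ⟨ω₁, hred₁, hω₁⟩ := cs.exists_reduced_word' (π ω * s i)
  have hπ : π (ω₁ ++ [i]) = π ω := by
    rw [cs.wordProd_append, cs.wordProd_singleton, ← hω₁,
      cs.simple_mul_simple_cancel_right]
  have h2 : eta cs (s i) ω = eta cs (s i) (ω₁ ++ [i]) :=
    eta_eq_of_wordProd_eq cs hπ.symm _
  have h4 : eta cs (s i) ω₁ = 1 := by
    apply List.prod_eq_one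
    intro x hx
    obtain ⟨y, hy, rfl⟩ := List.mem_map.mp hx
    apply if_neg
    intro hc
    subst hc
    have hinv := cs.isRightInversion_of_mem_rightInvSeq hred₁ hy
    have : ℓ (π ω₁ * s i) < ℓ (π ω₁) := hinv.2
    rw [← hω₁] at this
    rw [cs.simple_mul_simple_cancel_right] at this
    omega
  have h3 : eta cs (s i) (ω₁ ++ [i]) = -1 := by
    rw [eta, rightInvSeq_append, List.map_append, List.prod_append, List.map_map]
    have hfst : (List.map ((fun x => if x = s i then (-1 : ℤˣ) else 1) ∘
        fun x => (π [i])⁻¹ * x * π [i]) (cs.rightInvSeq ω₁)).prod = 1 := by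
      have heq : List.map ((fun x => if x = s i then (-1 : ℤˣ) else 1) ∘
          fun x => (π [i])⁻¹ * x * π [i]) (cs.rightInvSeq ω₁) =
          List.map (fun x => if x = s i then (-1 : ℤˣ) else 1) (cs.rightInvSeq ω₁) := by
        apply List.map_congr_left
        intro x _
        simp only [Function.comp_apply, cs.wordProd_singleton]
        have hiff : ((s i)⁻¹ * x * s i = s i) ↔ (x = s i) := by
          constructor
          · intro hc
            have := congrArg (fun y => s i * y * (s i)⁻¹) hc
            simpa [mul_assoc, cs.inv_simple, cs.simple_mul_simple_cancel_left,
              cs.simple_mul_simple_cancel_right, cs.simple_mul_simple_self] using this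
          · intro hc
            rw [hc, cs.inv_simple, cs.simple_mul_simple_self, one_mul]
        rw [if_congr hiff rfl rfl]
      rw [heq]
      exact h4
    rw [hfst, one_mul]
    show (List.map _ (cs.rightInvSeq [i])).prod = -1
    have : cs.rightInvSeq [i] = [s i] := by simp
    rw [this]
    simp
  rw [h2, h3] at h1
  exact absurd h1 (by decide)

/-- Right exchange property. -/
lemma right_exchange {ω : List B} (hred : cs.IsReduced ω) (i : B)
    (h : ℓ (π ω * s i) < ℓ (π ω)) :
    ∃ j < ω.length, π ω * s i = π (ω.eraseIdx j) := by
  obtain ⟨j, hj, hgc⟩ := List.mem_iff_getElem.mp (simple_mem_rightInvSeq cs hred i h)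
  have hj' : j < ω.length := by
    rw [cs.length_rightInvSeq] at hj
    exact hj
  refine ⟨j, hj', ?_⟩
  have := cs.wordProd_mul_getD_rightInvSeq ω j
  rw [List.getD_eq_getElem _ 1 hj, hgc] at this
  exact this

/-- Left exchange property. -/
lemma left_exchange {ω : List B} (hred : cs.IsReduced ω) (i : B)
    (h : ℓ (s i * π ω) < ℓ (π ω)) :
    ∃ j < ω.length, s i * π ω = π (ω.eraseIdx j) := by
  have hrev : cs.IsReduced ω.reverse := (cs.isReduced_reverse_iff ω).mpr hred
  have hlen : ℓ (π ω.reverse * s i) < ℓ (π ω.reverse) := by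
    rw [cs.wordProd_reverse]
    have he : (π ω)⁻¹ * s i = (s i * π ω)⁻¹ := by
      rw [mul_inv_rev, cs.inv_simple]
    rw [he, cs.length_inv, cs.length_inv]
    exact h
  have hmem := simple_mem_rightInvSeq cs hrev i hlen
  rw [cs.rightInvSeq_reverse, List.mem_reverse] at hmem
  obtain ⟨j, hj, hgc⟩ := List.mem_iff_getElem.mp hmem
  have hj' : j < ω.length := by
    rw [cs.length_leftInvSeq] at hj
    exact hj
  refine ⟨j, hj', ?_⟩
  have := cs.getD_leftInvSeq_mul_wordProd ω j
  rw [List.getD_eq_getElem _ 1 hj, hgc] at this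
  exact this

/-! ### Part II: parabolic subgroups and cosets -/

lemma exists_reduced_subword (ω : List B) : ∃ ω' : List B,
    cs.IsReduced ω' ∧ π ω' = π ω ∧ ∀ c ∈ ω', c ∈ ω := by
  generalize hn : ω.length = n
  induction n using Nat.strong_induction_on generalizing ω with
  | _ n ih =>
  by_cases hred : cs.IsReduced ω
  · exact ⟨ω, hred, rfl, fun c hc => hc⟩
  · have hω1 : 1 ≤ ω.length := by
      rcases Nat.eq_zero_or_pos ω.length with h0 | h1
      · exfalso
        apply hred
        rw [List.length_eq_zero_iff] at h0
        subst h0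
        simp [CoxeterSystem.IsReduced]
      · exact h1
    have hbad : ∃ k, ¬ cs.IsReduced (ω.take (k + 1)) := by
      refine ⟨ω.length - 1, ?_⟩
      have : ω.length - 1 + 1 = ω.length := by omega
      rw [this, List.take_length]
      exact hred
    classical
    set k0 := Nat.find hbad with hk0def
    have hk0 : ¬ cs.IsReduced (ω.take (k0 + 1)) := Nat.find_spec hbad
    have hk0len : k0 < ω.length := by
      have := Nat.find_min' hbad (m := ω.length - 1) (by
        have : ω.length - 1 + 1 = ω.length := by omega
        rw [this, List.take_length]
        exact hred)
      omega
    have hredk0 : cs.IsReduced (ω.take k0) := by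
      rcases Nat.eq_zero_or_pos k0 with h0 | h1
      · rw [h0]
        simp [CoxeterSystem.IsReduced]
      · have := Nat.find_min hbad (m := k0 - 1) (by omega)
        push_neg at this
        have he : k0 - 1 + 1 = k0 := by omega
        rwa [he] at this
    have htake : ω.take (k0 + 1) = ω.take k0 ++ [ω[k0]] := by
      rw [List.take_succ, List.getElem?_eq_getElem hk0len]
      rfl
    have hπtake : π (ω.take (k0 + 1)) = π (ω.take k0) * s (ω[k0]) := by
      rw [htake, cs.wordProd_append, cs.wordProd_singleton]
    have hlentake : (ω.take k0).length = k0 := by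
      rw [List.length_take]
      omega
    have hdrop : ℓ (π (ω.take k0) * s (ω[k0])) < ℓ (π (ω.take k0)) := by
      have hne : ℓ (π (ω.take (k0 + 1))) ≠ (ω.take (k0 + 1)).length := hk0
      have hlt1 : (ω.take (k0 + 1)).length = k0 + 1 := by
        rw [List.length_take]
        omega
      have hredlen : ℓ (π (ω.take k0)) = k0 := by
        rw [hredk0, hlentake]
      rcases cs.length_mul_simple (π (ω.take k0)) (ω[k0]) with h | h
      · exfalso
        apply hne
        rw [hπtake, h, hredlen, hlt1]
      · omega
    obtain ⟨j, hj, hex⟩ := right_exchange cs hredk0 (ω[k0]) hdrop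
    set ω'' := (ω.take k0).eraseIdx j ++ ω.drop (k0 + 1) with hω''
    have hπω'' : π ω'' = π ω := by
      conv_rhs => rw [← List.take_append_drop (k0 + 1) ω]
      rw [hω'', cs.wordProd_append, cs.wordProd_append, ← hex, hπtake]
    have hlenω'' : ω''.length < n := by
      have h6 := List.length_eraseIdx_add_one hj
      rw [hω'', List.length_append, List.length_drop]
      rw [hlentake] at h6
      omega
    obtain ⟨ω', hred', hπ', hsub'⟩ := ih ω''.length hlenω'' ω'' rfl
    refine ⟨ω', hred', by rw [hπ', hπω''], ?_⟩
    intro c hc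
    have hc'' := hsub' c hc
    rw [hω''] at hc''
    rcases List.mem_append.mp hc'' with h | h
    · exact List.mem_of_mem_take (List.mem_of_mem_eraseIdx h)
    · exact List.mem_of_mem_drop h

lemma simple_mem_parabolic {X : Set B} {i : B} (hi : i ∈ X) :
    s i ∈ coxParabolic cs X :=
  Subgroup.subset_closure ⟨i, hi, rfl⟩

lemma mem_parabolic_iff {X : Set B} (a : W) :
    a ∈ coxParabolic cs X ↔ ∃ ω : List B, (∀ i ∈ ω, i ∈ X) ∧ a = π ω := by
  constructor
  · intro ha
    induction ha using Subgroup.closure_induction with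
    | mem x hx =>
      obtain ⟨i, hi, rfl⟩ := hx
      exact ⟨[i], by simpa using hi, by simp⟩
    | one => exact ⟨[], by simp, by simp⟩
    | mul x y hx hy ihx ihy =>
      obtain ⟨ω₁, h₁, rfl⟩ := ihx
      obtain ⟨ω₂, h₂, rfl⟩ := ihy
      refine ⟨ω₁ ++ ω₂, ?_, by rw [cs.wordProd_append]⟩
      intro i hi
      rcases List.mem_append.mp hi with h | h
      · exact h₁ i h
      · exact h₂ i h
    | inv x hx ihx =>
      obtain ⟨ω₁, h₁, rfl⟩ := ihx
      refine ⟨ω₁.reverse, ?_, by rw [cs.wordProd_reverse]⟩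
      intro i hi
      exact h₁ i (List.mem_reverse.mp hi)
  · rintro ⟨ω, hX, rfl⟩
    apply Subgroup.list_prod_mem
    intro x hx
    obtain ⟨i, hi, rfl⟩ := List.mem_map.mp hx
    exact simple_mem_parabolic cs (hX i hi)

lemma exists_reduced_word_parabolic {X : Set B} {a : W} (ha : a ∈ coxParabolic cs X) :
    ∃ ω, (∀ i ∈ ω, i ∈ X) ∧ cs.IsReduced ω ∧ a = π ω := by
  obtain ⟨ω, hX, rfl⟩ := (mem_parabolic_iff cs _).mp ha
  obtain ⟨ω', hred', hπ', hsub'⟩ := exists_reduced_subword cs ω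
  exact ⟨ω', fun i hi => hX i (hsub' i hi), hred', hπ'.symm⟩

lemma head_letter {X : Set B} {a : W} (ha : a ∈ coxParabolic cs X) (hne : a ≠ 1) :
    ∃ i ∈ X, ∃ a' ∈ coxParabolic cs X, a = s i * a' ∧ ℓ a = ℓ a' + 1 := by
  obtain ⟨ω, hX, hred, rfl⟩ := exists_reduced_word_parabolic cs ha
  cases ω with
  | nil => exact absurd (by simp) hne
  | cons i ω' =>
    have hi : i ∈ X := hX i List.mem_cons_self
    have ha' : π ω' ∈ coxParabolic cs X :=
      (mem_parabolic_iff cs _).mpr ⟨ω', fun j hj => hX j (List.mem_cons_of_mem _ hj), rfl⟩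
    refine ⟨i, hi, π ω', ha', cs.wordProd_cons i ω', ?_⟩
    have h1 : ℓ (π (i :: ω')) = ω'.length + 1 := by
      rw [hred]
      simp
    have h2 : ℓ (π ω') ≤ ω'.length := cs.length_wordProd_le ω'
    have h3 : ℓ (π (i :: ω')) ≤ 1 + ℓ (π ω') := by
      rw [cs.wordProd_cons]
      have := cs.length_mul_le (s i) (π ω')
      rwa [cs.length_simple] at this
    omega

lemma tail_letter {Y : Set B} {b : W} (hb : b ∈ coxParabolic cs Y) (hne : b ≠ 1) :
    ∃ i ∈ Y, ∃ b' ∈ coxParabolic cs Y, b = b' * s i ∧ ℓ b = ℓ b' + 1 := by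
  obtain ⟨i, hi, c, hc, hbc, hlen⟩ := head_letter cs (inv_mem hb) (by simpa using hne)
  refine ⟨i, hi, c⁻¹, inv_mem hc, ?_, ?_⟩
  · have := congrArg (·⁻¹) hbc
    simpa [mul_inv_rev, cs.inv_simple] using this
  · rw [← cs.length_inv b, hlen, cs.length_inv]

lemma lcoset_additive {X : Set B} {u : W}
    (hu : ∀ a ∈ coxParabolic cs X, ℓ u ≤ ℓ (a * u)) :
    ∀ a ∈ coxParabolic cs X, ℓ (a * u) = ℓ a + ℓ u := by
  intro a ha
  generalize hn : ℓ a = n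
  induction n using Nat.strong_induction_on generalizing a with
  | _ n ih =>
  by_cases h1 : a = 1
  · subst h1
    simp at hn
    simp [← hn]
  · obtain ⟨i, hiX, a', ha', rfl, hlen⟩ := head_letter cs ha h1
    have iha' : ℓ (a' * u) = ℓ a' + ℓ u := ih (ℓ a') (by omega) a' ha' rfl
    rcases cs.length_simple_mul (a' * u) i with hup | hdown
    · rw [mul_assoc, hup, iha']
      omega
    · exfalso
      obtain ⟨α, hαX, hαred, hαeq⟩ := exists_reduced_word_parabolic cs ha'
      obtain ⟨β, hβred, hβeq⟩ := cs.exists_reduced_word' u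
      have hπαβ : π (α ++ β) = a' * u := by
        rw [cs.wordProd_append, ← hαeq, ← hβeq]
      have hαβ : cs.IsReduced (α ++ β) := by
        show ℓ (π (α ++ β)) = (α ++ β).length
        rw [hπαβ, iha', List.length_append]
        have h8 : α.length = ℓ a' := by rw [← hαred, ← hαeq]
        have h12 : β.length = ℓ u := by rw [← hβred, ← hβeq]
        omega
      have hlt : ℓ (s i * π (α ++ β)) < ℓ (π (α ++ β)) := by
        rw [hπαβ]
        omega
      obtain ⟨j, hj, hex⟩ := left_exchange cs hαβ i hlt
      rw [hπαβ] at hex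
      by_cases hjα : j < α.length
      · rw [List.eraseIdx_append_of_lt_length hjα] at hex
        rw [cs.wordProd_append] at hex
        have hcancel : s i * a' = π (α.eraseIdx j) := by
          have : s i * (a' * u) = (s i * a') * u := by group
          rw [this, ← hβeq] at hex
          exact mul_right_cancel hex
        have hle : ℓ (s i * a') ≤ α.length - 1 := by
          rw [hcancel]
          have h5 := cs.length_wordProd_le (α.eraseIdx j)
          have h6 := List.length_eraseIdx_add_one hjα
          omega
        have h7 : ℓ (s i * a') = ℓ a' + 1 := hlen
        have h8 : α.length = ℓ a' := by rw [← hαred, ← hαeq]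
        omega
      · push_neg at hjα
        rw [List.eraseIdx_append_of_length_le hjα] at hex
        rw [cs.wordProd_append] at hex
        set u' := π (β.eraseIdx (j - α.length)) with hu'def
        have hu'eq : u' = (a'⁻¹ * s i * a') * u := by
          have : a'⁻¹ * (s i * (a' * u)) = a'⁻¹ * (a' * u') := by rw [hex, ← hαeq]
          rw [← mul_assoc, ← mul_assoc, inv_mul_cancel_left] at this
          rw [← this]
        have hmem' : a'⁻¹ * s i * a' ∈ coxParabolic cs X :=
          mul_mem (mul_mem (inv_mem ha') (simple_mem_parabolic cs hiX)) ha'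
        have h9 := hu _ hmem'
        rw [← hu'eq] at h9
        have hjβ : j - α.length < β.length := by
          rw [List.length_append] at hj
          omega
        have h10 := cs.length_wordProd_le (β.eraseIdx (j - α.length))
        have h11 := List.length_eraseIdx_add_one hjβ
        have h12 : β.length = ℓ u := by rw [← hβred, ← hβeq]
        rw [← hu'def] at h10
        omega

lemma rcoset_additive {Y : Set B} {u : W}
    (hu : ∀ b ∈ coxParabolic cs Y, ℓ u ≤ ℓ (u * b)) :
    ∀ b ∈ coxParabolic cs Y, ℓ (u * b) = ℓ u + ℓ b := by
  intro b hb
  have hu' : ∀ a ∈ coxParabolic cs Y, ℓ u⁻¹ ≤ ℓ (a * u⁻¹) := by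
    intro a ha
    have h1 := hu a⁻¹ (inv_mem ha)
    have h2 : ℓ (a * u⁻¹) = ℓ (u * a⁻¹) := by
      rw [← cs.length_inv (a * u⁻¹)]
      congr 1
      group
    rw [h2, cs.length_inv]
    exact h1
  have := lcoset_additive cs hu' b⁻¹ (inv_mem hb)
  have h3 : (b⁻¹ * u⁻¹) = (u * b)⁻¹ := by group
  rw [h3, cs.length_inv, cs.length_inv, cs.length_inv] at this
  omega

lemma exists_min_lcoset (X : Set B) (g : W) :
    ∃ u, (∃ a ∈ coxParabolic cs X, u = a * g) ∧
      ∀ a ∈ coxParabolic cs X, ℓ u ≤ ℓ (a * g) := by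
  classical
  have hne : ∃ n, ∃ a ∈ coxParabolic cs X, ℓ (a * g) = n :=
    ⟨ℓ (1 * g), 1, one_mem _, rfl⟩
  obtain ⟨a₀, ha₀, hlen⟩ := Nat.find_spec hne
  refine ⟨a₀ * g, ⟨a₀, ha₀, rfl⟩, ?_⟩
  intro a ha
  rw [hlen]
  exact Nat.find_min' hne ⟨a, ha, rfl⟩

lemma min_self_form {X : Set B} {g u : W}
    (huc : ∃ a ∈ coxParabolic cs X, u = a * g)
    (hmin : ∀ a ∈ coxParabolic cs X, ℓ u ≤ ℓ (a * g)) :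
    ∀ a ∈ coxParabolic cs X, ℓ u ≤ ℓ (a * u) := by
  intro a ha
  obtain ⟨a₀, ha₀, rfl⟩ := huc
  rw [← mul_assoc]
  exact hmin (a * a₀) (mul_mem ha ha₀)

lemma eq_of_noDescent_lcoset {X : Set B} {g u v : W}
    (huc : ∃ a ∈ coxParabolic cs X, u = a * g)
    (humin : ∀ a ∈ coxParabolic cs X, ℓ u ≤ ℓ (a * g))
    (hvc : ∃ a ∈ coxParabolic cs X, v = a * g)
    (hnd : ∀ i ∈ X, ¬ ℓ (s i * v) < ℓ v) : v = u := by
  obtain ⟨a₀, ha₀, hueq⟩ := huc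
  obtain ⟨a₁, ha₁, hveq⟩ := hvc
  have hveq' : v = (a₁ * a₀⁻¹) * u := by
    rw [hueq, hveq]
    group
  have hamem : a₁ * a₀⁻¹ ∈ coxParabolic cs X := mul_mem ha₁ (inv_mem ha₀)
  have hadd := lcoset_additive cs (min_self_form cs ⟨a₀, ha₀, hueq⟩ humin)
  by_cases hone : a₁ * a₀⁻¹ = 1
  · rw [hveq', hone, one_mul]
  · obtain ⟨i, hiX, a', ha', haeq, halen⟩ := head_letter cs hamem hone
    exfalso
    apply hnd i hiX
    have h1 : s i * v = a' * u := by
      rw [hveq', haeq, ← mul_assoc, ← mul_assoc, cs.simple_mul_simple_self, one_mul]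
    have h2 : ℓ (s i * v) = ℓ a' + ℓ u := by rw [h1, hadd a' ha']
    have h3 : ℓ v = (ℓ a' + 1) + ℓ u := by
      rw [hveq', hadd _ hamem, halen]
    omega

lemma deodhar {X : Set B} {u : W}
    (hu : ∀ a ∈ coxParabolic cs X, ℓ u ≤ ℓ (a * u)) (i : B) :
    ∃ d, (∃ a ∈ coxParabolic cs X, d = a * (u * s i)) ∧
      (∀ a ∈ coxParabolic cs X, ℓ d ≤ ℓ (a * (u * s i))) ∧
      (d = u * s i ∨ d = u) := by
  have haux : ∀ x : W, ℓ x ≤ ℓ (x * s i) + 1 := by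
    intro x
    rcases cs.length_mul_simple x i with h | h <;> omega
  rcases cs.length_mul_simple u i with hinc | hdec
  · by_cases hmin2 : ∀ a ∈ coxParabolic cs X, ℓ (u * s i) ≤ ℓ (a * (u * s i))
    · exact ⟨u * s i, ⟨1, one_mem _, by rw [one_mul]⟩, hmin2, Or.inl rfl⟩
    · push_neg at hmin2
      obtain ⟨a₁, ha₁, hlt₁⟩ := hmin2
      obtain ⟨u₂, ⟨a₂, ha₂, hu₂⟩, hmin₂⟩ := exists_min_lcoset cs X (u * s i)
      have hu₂lt : ℓ u₂ < ℓ (u * s i) := lt_of_le_of_lt (hmin₂ a₁ ha₁) hlt₁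
      have husi : u * s i = a₂⁻¹ * u₂ := by
        rw [hu₂]
        group
      have hadd := lcoset_additive cs (min_self_form cs ⟨a₂, ha₂, hu₂⟩ hmin₂)
      have hlensplit : ℓ (u * s i) = ℓ a₂⁻¹ + ℓ u₂ := by
        rw [husi, hadd a₂⁻¹ (inv_mem ha₂)]
      have ha₂ne : a₂⁻¹ ≠ (1 : W) := by
        intro hc
        rw [hc] at hlensplit
        simp [cs.length_one] at hlensplit
        omega
      obtain ⟨j, hjX, a₃, ha₃, ha₂eq, ha₂len⟩ := head_letter cs (inv_mem ha₂) ha₂ne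
      have hsj : ℓ (s j * (u * s i)) < ℓ (u * s i) := by
        have h1 : s j * (u * s i) = a₃ * u₂ := by
          rw [husi, ha₂eq, ← mul_assoc, ← mul_assoc, cs.simple_mul_simple_self, one_mul]
        rw [h1, hadd a₃ ha₃]
        omega
      obtain ⟨ωu, hωured, hωueq⟩ := cs.exists_reduced_word' u
      have hπui : π (ωu ++ [i]) = u * s i := by
        rw [cs.wordProd_append, cs.wordProd_singleton, ← hωueq]
      have hredui : cs.IsReduced (ωu ++ [i]) := by
        show ℓ (π (ωu ++ [i])) = _
        rw [hπui, List.length_append, List.length_singleton, hinc, ← hωured, ← hωueq]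
      obtain ⟨k, hk, hex⟩ := left_exchange cs hredui j (by rw [hπui]; exact hsj)
      rw [hπui] at hex
      by_cases hkω : k < ωu.length
      · exfalso
        rw [List.eraseIdx_append_of_lt_length hkω, cs.wordProd_append,
          cs.wordProd_singleton] at hex
        have hcancel : s j * u = π (ωu.eraseIdx k) := by
          have h1 : s j * (u * s i) = (s j * u) * s i := by group
          rw [h1] at hex
          exact mul_right_cancel hex
        have h5 := cs.length_wordProd_le (ωu.eraseIdx k)
        have h6 := List.length_eraseIdx_add_one hkω
        have h7 := hu (s j) (simple_mem_parabolic cs hjX)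
        have h8 : ωu.length = ℓ u := by rw [← hωured, ← hωueq]
        rw [← hcancel] at h5
        omega
      · have hkeq : k = ωu.length := by
          rw [List.length_append, List.length_singleton] at hk
          omega
        rw [List.eraseIdx_append_of_length_le (le_of_eq hkeq.symm)] at hex
        rw [hkeq, Nat.sub_self] at hex
        have hexu : s j * (u * s i) = u := by
          rw [hex]
          show π (ωu ++ []) = u
          rw [List.append_nil, ← hωueq]
        have husj : u * s i = s j * u := by
          have := congrArg (fun x => s j * x) hexu
          rw [← mul_assoc, cs.simple_mul_simple_self, one_mul] at this
          rw [this]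
        refine ⟨u, ⟨s j, simple_mem_parabolic cs hjX, hexu.symm⟩, ?_, Or.inr rfl⟩
        intro a ha
        rw [husj, ← mul_assoc]
        exact hu (a * s j) (mul_mem ha (simple_mem_parabolic cs hjX))
  · refine ⟨u * s i, ⟨1, one_mem _, by rw [one_mul]⟩, ?_, Or.inl rfl⟩
    intro a ha
    have h1 := haux (a * u)
    have h2 := hu a ha
    rw [mul_assoc] at h1
    omega

lemma claimC {X Y : Set B} {w₀ : W}
    (hw₀ : ∀ a ∈ coxParabolic cs X, ℓ w₀ ≤ ℓ (a * w₀)) :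
    ∀ n (b : W), b ∈ coxParabolic cs Y → ℓ b = n →
      ∃ c ∈ coxParabolic cs Y, (∃ a ∈ coxParabolic cs X, w₀ * c = a * (w₀ * b)) ∧
        ∀ a ∈ coxParabolic cs X, ℓ (w₀ * c) ≤ ℓ (a * (w₀ * b)) := by
  intro n
  induction n using Nat.strong_induction_on with
  | _ n ih =>
  intro b hb hbn
  by_cases hone : b = 1
  · subst hone
    refine ⟨1, one_mem _, ⟨1, one_mem _, by simp⟩, ?_⟩
    intro a ha
    simpa using hw₀ a ha
  · obtain ⟨i, hiY, b', hb', hbeq, hblen⟩ := tail_letter cs hb hone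
    obtain ⟨c', hc', ⟨a₀, ha₀, hceq⟩, hcmin⟩ :=
      ih (ℓ b') (by omega) b' hb' rfl
    have hu : ∀ a ∈ coxParabolic cs X, ℓ (w₀ * c') ≤ ℓ (a * (w₀ * c')) := by
      intro a ha
      calc ℓ (w₀ * c') ≤ ℓ ((a * a₀) * (w₀ * b')) := hcmin _ (mul_mem ha ha₀)
        _ = ℓ (a * (w₀ * c')) := by rw [hceq]; group
    obtain ⟨d, ⟨a₁, ha₁, hdeq⟩, hdmin, hdcase⟩ := deodhar cs hu i
    have hkey : (w₀ * c') * s i = a₀ * (w₀ * b) := by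
      rw [hceq, hbeq]
      group
    have hmemd : ∃ a ∈ coxParabolic cs X, d = a * (w₀ * b) := by
      refine ⟨a₁ * a₀, mul_mem ha₁ ha₀, ?_⟩
      rw [hdeq, hkey]
      group
    have hmind : ∀ a ∈ coxParabolic cs X, ℓ d ≤ ℓ (a * (w₀ * b)) := by
      intro a ha
      have h1 : a * (w₀ * b) = (a * a₀⁻¹) * ((w₀ * c') * s i) := by
        rw [hkey]
        group
      rw [h1]
      exact hdmin _ (mul_mem ha (inv_mem ha₀))
    rcases hdcase with hcase | hcase
    · refine ⟨c' * s i, mul_mem hc' (simple_mem_parabolic cs hiY), ?_, ?_⟩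
      · obtain ⟨a₂, ha₂, hmd⟩ := hmemd
        refine ⟨a₂, ha₂, ?_⟩
        rw [← hmd, hcase]
        group
      · intro a ha
        have hwc : w₀ * (c' * s i) = d := by
          rw [hcase]
          group
        rw [hwc]
        exact hmind a ha
    · refine ⟨c', hc', ?_, ?_⟩
      · obtain ⟨a₂, ha₂, hmd⟩ := hmemd
        exact ⟨a₂, ha₂, by rw [← hcase, hmd]⟩
      · intro a ha
        rw [← hcase]
        exact hmind a ha

lemma hard_case {X Y : Set B} {w₀ v : W}
    (hminXY : ∀ a ∈ coxParabolic cs X, ∀ b ∈ coxParabolic cs Y, ℓ w₀ ≤ ℓ (a * w₀ * b))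
    (hv : ∃ a ∈ coxParabolic cs X, ∃ b ∈ coxParabolic cs Y, v = a * w₀ * b)
    (hndX : ∀ i ∈ X, ¬ ℓ (s i * v) < ℓ v)
    (hndY : ∀ i ∈ Y, ¬ ℓ (v * s i) < ℓ v) : v = w₀ := by
  obtain ⟨a, ha, b, hb, hveq⟩ := hv
  have hw₀L : ∀ a' ∈ coxParabolic cs X, ℓ w₀ ≤ ℓ (a' * w₀) := by
    intro a' ha'
    have := hminXY a' ha' 1 (one_mem _)
    rwa [mul_one] at this
  have hw₀R : ∀ b' ∈ coxParabolic cs Y, ℓ w₀ ≤ ℓ (w₀ * b') := by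
    intro b' hb'
    have := hminXY 1 (one_mem _) b' hb'
    rwa [one_mul] at this
  obtain ⟨c, hc, hcc, hcmin⟩ := claimC cs hw₀L (ℓ b) b hb rfl
  have hvc : ∃ a' ∈ coxParabolic cs X, v = a' * (w₀ * b) := by
    exact ⟨a, ha, by rw [hveq, mul_assoc]⟩
  have hveqc : v = w₀ * c := eq_of_noDescent_lcoset cs hcc hcmin hvc hndX
  have hradd := rcoset_additive cs hw₀R
  by_cases hcone : c = 1
  · rw [hveqc, hcone, mul_one]
  · exfalso
    obtain ⟨i, hiY, c'', hc'', hceq, hclen⟩ := tail_letter cs hc hcone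
    apply hndY i hiY
    have h1 : v * s i = w₀ * c'' := by
      rw [hveqc, hceq]
      have : c'' * s i * s i = c'' := cs.simple_mul_simple_cancel_right i
      rw [mul_assoc, mul_assoc]
      rw [cs.simple_mul_simple_self, mul_one]
    have h2 : ℓ (v * s i) = ℓ w₀ + ℓ c'' := by rw [h1, hradd c'' hc'']
    have h3 : ℓ v = ℓ w₀ + (ℓ c'' + 1) := by
      rw [hveqc, hradd c hc, hclen]
    omega


end CoxAux

end

/-- If `w₀` is of minimal length in the double coset `W_X · w · W_Y`, then every element
`v` of the double coset can be written as `v = u₁ * w₀ * u₂` with `u₁ ∈ W_X`, `u₂ ∈ W_Y` and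
`ℓ(v) = ℓ(u₁) + ℓ(w₀) + ℓ(u₂)`. -/
theorem double_coset_decomp {B W : Type*} [Group W] {M : CoxeterMatrix B}
    (cs : CoxeterSystem M W) (X Y : Set B) (w w₀ : W)
    (hmem : ∃ u₁ ∈ coxParabolic cs X, ∃ u₂ ∈ coxParabolic cs Y, w₀ = u₁ * w * u₂)
    (hmin : ∀ v : W, (∃ u₁ ∈ coxParabolic cs X, ∃ u₂ ∈ coxParabolic cs Y, v = u₁ * w * u₂) →
      cs.length w₀ ≤ cs.length v) :
    ∀ v : W, (∃ u₁ ∈ coxParabolic cs X, ∃ u₂ ∈ coxParabolic cs Y, v = u₁ * w * u₂) →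
      ∃ u₁ ∈ coxParabolic cs X, ∃ u₂ ∈ coxParabolic cs Y,
        v = u₁ * w₀ * u₂ ∧ cs.length v = cs.length u₁ + cs.length w₀ + cs.length u₂ := by
  classical
  obtain ⟨p, hp, q, hq, hw₀eq⟩ := hmem
  have hweq : w = p⁻¹ * w₀ * q⁻¹ := by rw [hw₀eq]; group
  have hDc : ∀ v : W,
      (∃ u₁ ∈ coxParabolic cs X, ∃ u₂ ∈ coxParabolic cs Y, v = u₁ * w * u₂) ↔
      (∃ u₁ ∈ coxParabolic cs X, ∃ u₂ ∈ coxParabolic cs Y, v = u₁ * w₀ * u₂) := by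
    intro v
    constructor
    · rintro ⟨a, ha, b, hb, rfl⟩
      exact ⟨a * p⁻¹, mul_mem ha (inv_mem hp), q⁻¹ * b, mul_mem (inv_mem hq) hb,
        by rw [hweq]; group⟩
    · rintro ⟨a, ha, b, hb, rfl⟩
      exact ⟨a * p, mul_mem ha hp, q * b, mul_mem hq hb, by rw [hweq]; group⟩
  have hminXY : ∀ a ∈ coxParabolic cs X, ∀ b ∈ coxParabolic cs Y,
      cs.length w₀ ≤ cs.length (a * w₀ * b) := by
    intro a ha b hb
    exact hmin _ ((hDc _).mpr ⟨a, ha, b, hb, rfl⟩)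
  suffices key : ∀ n (v : W),
      (∃ u₁ ∈ coxParabolic cs X, ∃ u₂ ∈ coxParabolic cs Y, v = u₁ * w₀ * u₂) →
      cs.length v = n →
      ∃ u₁ ∈ coxParabolic cs X, ∃ u₂ ∈ coxParabolic cs Y,
        v = u₁ * w₀ * u₂ ∧ cs.length v = cs.length u₁ + cs.length w₀ + cs.length u₂ by
    intro v hv
    exact key (cs.length v) v ((hDc v).mp hv) rfl
  intro n
  induction n using Nat.strong_induction_on with
  | _ n ih =>
  intro v hv hn
  by_cases h1 : ∃ i ∈ X, cs.length (cs.simple i * v) < cs.length v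
  · obtain ⟨i, hiX, hlt⟩ := h1
    obtain ⟨a, ha, b, hb, hveq⟩ := hv
    have hv' : ∃ u₁ ∈ coxParabolic cs X, ∃ u₂ ∈ coxParabolic cs Y,
        cs.simple i * v = u₁ * w₀ * u₂ :=
      ⟨cs.simple i * a, mul_mem (CoxAux.simple_mem_parabolic cs hiX) ha, b, hb,
        by rw [hveq]; group⟩
    have hlv : cs.length (cs.simple i * v) + 1 = cs.length v := by
      rcases cs.length_simple_mul v i with h | h
      · omega
      · exact h
    obtain ⟨a', ha', b', hb', heq, hadd⟩ :=
      ih (cs.length (cs.simple i * v)) (by omega) (cs.simple i * v) hv' rfl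
    have hveq2 : v = (cs.simple i * a') * w₀ * b' := by
      have hvv : v = cs.simple i * (cs.simple i * v) := by
        rw [← mul_assoc, cs.simple_mul_simple_self, one_mul]
      rw [hvv, heq]
      group
    refine ⟨cs.simple i * a', mul_mem (CoxAux.simple_mem_parabolic cs hiX) ha', b', hb',
      hveq2, ?_⟩
    have hup : cs.length v ≤
        cs.length (cs.simple i * a') + cs.length w₀ + cs.length b' := by
      calc cs.length v = cs.length ((cs.simple i * a') * w₀ * b') := by rw [← hveq2]
        _ ≤ cs.length ((cs.simple i * a') * w₀) + cs.length b' := cs.length_mul_le _ _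
        _ ≤ cs.length (cs.simple i * a') + cs.length w₀ + cs.length b' := by
            have := cs.length_mul_le (cs.simple i * a') w₀
            omega
    have hsa : cs.length (cs.simple i * a') ≤ cs.length a' + 1 := by
      rcases cs.length_simple_mul a' i with h | h <;> omega
    omega
  · by_cases h2 : ∃ i ∈ Y, cs.length (v * cs.simple i) < cs.length v
    · obtain ⟨i, hiY, hlt⟩ := h2
      obtain ⟨a, ha, b, hb, hveq⟩ := hv
      have hv' : ∃ u₁ ∈ coxParabolic cs X, ∃ u₂ ∈ coxParabolic cs Y,
          v * cs.simple i = u₁ * w₀ * u₂ :=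
        ⟨a, ha, b * cs.simple i, mul_mem hb (CoxAux.simple_mem_parabolic cs hiY),
          by rw [hveq]; group⟩
      have hlv : cs.length (v * cs.simple i) + 1 = cs.length v := by
        rcases cs.length_mul_simple v i with h | h
        · omega
        · exact h
      obtain ⟨a', ha', b', hb', heq, hadd⟩ :=
        ih (cs.length (v * cs.simple i)) (by omega) (v * cs.simple i) hv' rfl
      have hveq2 : v = a' * w₀ * (b' * cs.simple i) := by
        have hvv : v = (v * cs.simple i) * cs.simple i := by
          rw [mul_assoc, cs.simple_mul_simple_self, mul_one]
        rw [hvv, heq]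
        group
      refine ⟨a', ha', b' * cs.simple i,
        mul_mem hb' (CoxAux.simple_mem_parabolic cs hiY), hveq2, ?_⟩
      have hup : cs.length v ≤
          cs.length a' + cs.length w₀ + cs.length (b' * cs.simple i) := by
        calc cs.length v = cs.length (a' * w₀ * (b' * cs.simple i)) := by rw [← hveq2]
          _ ≤ cs.length (a' * w₀) + cs.length (b' * cs.simple i) := cs.length_mul_le _ _
          _ ≤ cs.length a' + cs.length w₀ + cs.length (b' * cs.simple i) := by
              have := cs.length_mul_le a' w₀
              omega
      have hsb : cs.length (b' * cs.simple i) ≤ cs.length b' + 1 := by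
        rcases cs.length_mul_simple b' i with h | h <;> omega
      omega
    · push_neg at h1 h2
      have hvw : v = w₀ := by
        apply CoxAux.hard_case cs hminXY hv
        · intro i hi
          exact not_lt.mpr (h1 i hi)
        · intro i hi
          exact not_lt.mpr (h2 i hi)
      refine ⟨1, one_mem _, 1, one_mem _, by rw [hvw]; group, ?_⟩
      rw [hvw]
      simp
end

section
/- Let W be a Coxeter group and X, Y ⊆ S subsets of the generating set. Let w₀ ∈ W be (X,Y)-minimal (of minimal length in its double coset W_X w₀ W_Y) and suppose w₀ W_Y w₀⁻¹ ⊆ W_X. Then for every y ∈ Y there exists x ∈ X such that w₀ s_y w₀⁻¹ = s_x; that is, conjugation by w₀ maps the generating set S_Y into the generating set S_X. -/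
open CoxeterSystem List

namespace CoxExchangeAux

variable {B W : Type*} [Group W] {M : CoxeterMatrix B} (cs : CoxeterSystem M W)

local prefix:100 "s" => cs.simple
local prefix:100 "π" => cs.wordProd
local prefix:100 "ℓ" => cs.length
local prefix:100 "ris" => cs.rightInvSeq
local prefix:100 "lis" => cs.leftInvSeq

/-- Indicator function with values in `ZMod 2`. -/
noncomputable def ind (a b : W) : ZMod 2 :=
  haveI := Classical.decEq W
  if a = b then 1 else 0

@[simp] lemma ind_self (a : W) : ind a a = 1 := by
  haveI := Classical.decEq W
  simp [ind]

lemma ind_of_ne {a b : W} (h : a ≠ b) : ind a b = 0 := by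
  haveI := Classical.decEq W
  simp [ind, h]

lemma ind_conj (c a b : W) : ind (c * a * c⁻¹) (c * b * c⁻¹) = ind a b := by
  haveI := Classical.decEq W
  simp [ind, mul_left_cancel_iff, mul_right_cancel_iff]

lemma ind_ne_zero {a b : W} (h : ind a b ≠ 0) : a = b := by
  by_contra hab
  exact h (ind_of_ne hab)

/-- The basic map of the permutation representation (Björner–Brenti, Ch. 1.4). -/
noncomputable def eta (i : B) : Function.End (W × ZMod 2) :=
  fun p => (s i * p.1 * s i, p.2 + ind p.1 (s i))

lemma eta_apply (i : B) (t : W) (ε : ZMod 2) :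
    eta cs i (t, ε) = (s i * t * s i, ε + ind t (s i)) := rfl

lemma eta_mul_pow_apply (i j : B) (n : ℕ) (t : W) (ε : ZMod 2) :
    ((eta cs i * eta cs j) ^ n) (t, ε) =
      ((s i * s j) ^ n * t * ((s i * s j) ^ n)⁻¹,
        ε + ∑ k ∈ Finset.range n,
          (ind t (((s i * s j) ^ k)⁻¹ * s j * (s i * s j) ^ k)
            + ind t (((s i * s j) ^ k)⁻¹ * (s j * s i * s j) * (s i * s j) ^ k))) := by
  induction n with
  | zero =>
    show (t, ε) = _
    simp
  | succ n ih =>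
    rw [pow_succ']
    show ((eta cs i * eta cs j) (((eta cs i * eta cs j) ^ n) (t, ε))) = _
    rw [ih]
    show eta cs i (eta cs j _) = _
    rw [eta_apply, eta_apply]
    have e1 : s j * ((s i * s j) ^ n * t * ((s i * s j) ^ n)⁻¹) * s j
        = (s j * (s i * s j) ^ n) * t * (s j * (s i * s j) ^ n)⁻¹ := by
      simp only [mul_inv_rev, cs.inv_simple]; group
    have e2 : s i * ((s j * (s i * s j) ^ n) * t * (s j * (s i * s j) ^ n)⁻¹) * s i
        = (s i * s j) ^ (n + 1) * t * ((s i * s j) ^ (n + 1))⁻¹ := by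
      simp only [pow_succ', mul_inv_rev, cs.inv_simple]; group
    have hind1 : ind ((s i * s j) ^ n * t * ((s i * s j) ^ n)⁻¹) (s j)
        = ind t (((s i * s j) ^ n)⁻¹ * s j * (s i * s j) ^ n) := by
      have h := ind_conj ((s i * s j) ^ n) t (((s i * s j) ^ n)⁻¹ * s j * (s i * s j) ^ n)
      rw [show (s i * s j) ^ n * (((s i * s j) ^ n)⁻¹ * s j * (s i * s j) ^ n)
        * ((s i * s j) ^ n)⁻¹ = s j by group] at h
      exact h
    have hind2 : ind ((s j * (s i * s j) ^ n) * t * (s j * (s i * s j) ^ n)⁻¹) (s i)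
        = ind t (((s i * s j) ^ n)⁻¹ * (s j * s i * s j) * (s i * s j) ^ n) := by
      have h := ind_conj (s j * (s i * s j) ^ n) t
        ((s j * (s i * s j) ^ n)⁻¹ * s i * (s j * (s i * s j) ^ n))
      rw [show (s j * (s i * s j) ^ n) * ((s j * (s i * s j) ^ n)⁻¹ * s i
        * (s j * (s i * s j) ^ n)) * (s j * (s i * s j) ^ n)⁻¹ = s i by group] at h
      rw [h]
      congr 1
      simp only [mul_inv_rev, cs.inv_simple]
      group
    rw [e1, hind1, e2, hind2, Finset.sum_range_succ, Prod.mk.injEq]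
    exact ⟨rfl, by ring⟩

lemma conj_simple_pow (i j : B) (k : ℕ) :
    ((s i * s j) ^ k)⁻¹ * s j * (s i * s j) ^ k = s j * (s i * s j) ^ (2 * k) := by
  set p := s i * s j with hp
  have hj : s j * p * s j = p⁻¹ := by
    rw [hp]
    rw [show s j * (s i * s j) * s j = s j * s i * (s j * s j) by group,
      cs.simple_mul_simple_self, mul_one, mul_inv_rev, cs.inv_simple, cs.inv_simple]
  have hkey : s j * p ^ k * s j = (p ^ k)⁻¹ := by
    have : (s j * p * (s j)⁻¹) ^ k = s j * p ^ k * (s j)⁻¹ := conj_pow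
    rw [cs.inv_simple] at this
    rw [← this, hj, inv_pow]
  have : (p ^ k)⁻¹ = s j * p ^ k * s j := hkey.symm
  rw [this]
  have : s j * p ^ k * s j * s j * p ^ k = s j * p ^ k * p ^ k := by
    rw [show s j * p ^ k * s j * s j * p ^ k = s j * p ^ k * (s j * s j) * p ^ k by group,
      cs.simple_mul_simple_self, mul_one]
  rw [this, two_mul, pow_add]
  group

lemma conj_simple_pow' (i j : B) (k : ℕ) :
    ((s i * s j) ^ k)⁻¹ * (s j * s i * s j) * (s i * s j) ^ k
      = s j * (s i * s j) ^ (2 * k + 1) := by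
  set p := s i * s j with hp
  have h1 : s j * s i * s j = p⁻¹ * s j := by
    rw [hp, mul_inv_rev, cs.inv_simple, cs.inv_simple]
  have h2 : ((s i * s j) ^ (k+1))⁻¹ * s j * (s i * s j) ^ (k+1)
      = s j * (s i * s j) ^ (2 * (k+1)) := conj_simple_pow cs i j (k+1)
  calc (p ^ k)⁻¹ * (s j * s i * s j) * p ^ k
      = (p ^ (k+1))⁻¹ * s j * p ^ (k+1) * p⁻¹ := by
        rw [h1, pow_succ]
        group
    _ = s j * p ^ (2 * (k+1)) * p⁻¹ := by rw [h2]
    _ = s j * p ^ (2 * k + 1) := by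
        rw [show 2 * (k+1) = (2 * k + 1) + 1 by ring, pow_succ]
        group

lemma eta_liftable : M.IsLiftable (eta cs) := by
  intro i j
  set m := M i j with hm
  have hrel : (s i * s j) ^ m = 1 := cs.simple_mul_simple_pow i j
  funext q
  obtain ⟨t, ε⟩ := q
  rw [eta_mul_pow_apply]
  have hconj : ∀ k, (ind t (((s i * s j) ^ k)⁻¹ * s j * (s i * s j) ^ k)
      + ind t (((s i * s j) ^ k)⁻¹ * (s j * s i * s j) * (s i * s j) ^ k))
      = ind t (s j * (s i * s j) ^ (2 * k)) + ind t (s j * (s i * s j) ^ (2 * k + 1)) := by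
    intro k
    rw [conj_simple_pow, conj_simple_pow']
  rw [Finset.sum_congr rfl (fun k _ => hconj k)]
  have hsum2 : ∀ n : ℕ, ∑ k ∈ Finset.range n,
      (ind t (s j * (s i * s j) ^ (2 * k)) + ind t (s j * (s i * s j) ^ (2 * k + 1)))
      = ∑ k ∈ Finset.range (2 * n), ind t (s j * (s i * s j) ^ k) := by
    intro n
    induction n with
    | zero => simp
    | succ n ih =>
      rw [Finset.sum_range_succ, ih, show 2 * (n + 1) = (2 * n) + 1 + 1 by ring,
        Finset.sum_range_succ, Finset.sum_range_succ]
      ring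
  rw [hsum2]
  have hper : ∀ k, ind t (s j * (s i * s j) ^ (m + k)) = ind t (s j * (s i * s j) ^ k) := by
    intro k
    rw [pow_add, hrel, one_mul]
  have : ∑ k ∈ Finset.range (2 * m), ind t (s j * (s i * s j) ^ k)
      = ∑ k ∈ Finset.range m, ind t (s j * (s i * s j) ^ k)
        + ∑ k ∈ Finset.range m, ind t (s j * (s i * s j) ^ (m + k)) := by
    rw [two_mul, Finset.sum_range_add]
  rw [this, Finset.sum_congr rfl (fun k _ => hper k), CharTwo.add_self_eq_zero, add_zero,
    hrel]
  show _ = (1 : Function.End (W × ZMod 2)) (t, ε)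
  show _ = (t, ε)
  simp

/-- The permutation representation `W →* Function.End (W × ZMod 2)`. -/
noncomputable def phi : W →* Function.End (W × ZMod 2) :=
  cs.lift ⟨eta cs, eta_liftable cs⟩

lemma phi_simple (i : B) : phi cs (s i) = eta cs i :=
  cs.lift_apply_simple (eta_liftable cs) i

lemma ris_cons (i : B) (ω : List B) :
    ris (i :: ω) = (π ω)⁻¹ * s i * π ω :: ris ω := rfl

lemma phi_wordProd (ω : List B) (t : W) (ε : ZMod 2) :
    phi cs (π ω) (t, ε) = (π ω * t * (π ω)⁻¹, ε + ((ris ω).map (ind t)).sum) := by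
  induction ω generalizing ε with
  | nil =>
    rw [cs.wordProd_nil, map_one]
    show (t, ε) = _
    simp
  | cons i ω ih =>
    rw [cs.wordProd_cons, map_mul, phi_simple]
    show eta cs i (phi cs (π ω) (t, ε)) = _
    rw [ih, eta_apply, ris_cons, List.map_cons, List.sum_cons]
    have h1 : s i * (π ω * t * (π ω)⁻¹) * s i
        = π (i :: ω) * t * (π (i :: ω))⁻¹ := by
      rw [cs.wordProd_cons, mul_inv_rev, cs.inv_simple]
      group
    have h2 : ind (π ω * t * (π ω)⁻¹) (s i) = ind t ((π ω)⁻¹ * s i * π ω) := by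
      have := ind_conj (c := (π ω)⁻¹) (π ω * t * (π ω)⁻¹) (s i)
      rw [← this]
      congr 1 <;> group
    rw [h1, h2, Prod.mk.injEq]
    exact ⟨rfl, by ring⟩

/-- The sign invariant: parity of the number of occurrences of `t` in the
right inversion sequence of any word for `w`. -/
noncomputable def sgn (w t : W) : ZMod 2 := (phi cs w (t, 0)).2

lemma phi_apply (w t : W) (ε : ZMod 2) :
    phi cs w (t, ε) = (w * t * w⁻¹, ε + sgn cs w t) := by
  obtain ⟨ω, rfl⟩ := cs.wordProd_surjective w
  rw [phi_wordProd, sgn, phi_wordProd, zero_add]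

lemma sgn_eq_sum (ω : List B) (t : W) :
    sgn cs (π ω) t = ((ris ω).map (ind t)).sum := by
  rw [sgn, phi_wordProd, zero_add]

lemma mem_ris_of_sgn_one {ω : List B} {t : W} (h : sgn cs (π ω) t = 1) :
    t ∈ ris ω := by
  rw [sgn_eq_sum] at h
  by_contra hmem
  have : ∀ x ∈ (ris ω).map (ind t), x = 0 := by
    intro x hx
    obtain ⟨u, hu, rfl⟩ := List.mem_map.mp hx
    refine ind_of_ne (fun htu => hmem ?_)
    rwa [← htu] at hu
  rw [List.sum_eq_zero this] at h
  exact one_ne_zero h.symm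

/-- For a reflection `t`, `φ t` flips the sign on `(t, ε)`. -/
lemma phi_refl_self {t : W} (ht : cs.IsReflection t) (ε : ZMod 2) :
    phi cs t (t, ε) = (t, ε + 1) := by
  obtain ⟨w, i, rfl⟩ := ht
  obtain ⟨ω, rfl⟩ := cs.wordProd_surjective w
  induction ω generalizing ε with
  | nil =>
    rw [wordProd_nil, one_mul, inv_one, mul_one, phi_simple, eta_apply, ind_self,
      show s i * s i * s i = s i by rw [cs.simple_mul_simple_self, one_mul]]
  | cons j ω ih =>
    rw [cs.wordProd_cons]
    set t := π ω * s i * (π ω)⁻¹ with hT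
    have hTr : s j * π ω * s i * (s j * π ω)⁻¹ = s j * t * s j := by
      simp only [mul_inv_rev, cs.inv_simple, hT]
      group
    rw [show s j * π ω * s i * (s j * π ω)⁻¹ = s j * t * s j from hTr]
    rw [show (s j * t * s j : W) = s j * (t * s j) by group, map_mul, map_mul, phi_simple]
    show eta cs j (phi cs t (eta cs j (s j * (t * s j), ε))) = _
    have h1 : s j * (s j * (t * s j)) * s j = t := by
      rw [show s j * (s j * (t * s j)) * s j = (s j * s j) * t * (s j * s j) by group,
        cs.simple_mul_simple_self, one_mul, mul_one]
    have h2 : ind (s j * (t * s j)) (s j) = ind t (s j) := by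
      have h := ind_conj (s j) t (s j)
      rw [cs.inv_simple] at h
      rw [show s j * s j * s j = s j by
        rw [show s j * s j * s j = (s j * s j) * s j from rfl, cs.simple_mul_simple_self,
          one_mul]] at h
      rw [show (s j * (t * s j) : W) = s j * t * s j by group, h]
    have step1 : eta cs j (s j * (t * s j), ε) = (t, ε + ind t (s j)) := by
      rw [eta_apply, h1, h2]
    have step2 : phi cs t (t, ε + ind t (s j)) = (t, ε + ind t (s j) + 1) :=
      ih (ε + ind t (s j))
    have step3 : eta cs j (t, ε + ind t (s j) + 1)
        = (s j * t * s j, ε + ind t (s j) + 1 + ind t (s j)) := eta_apply cs j t _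
    rw [step1, step2, step3, Prod.mk.injEq]
    constructor
    · group
    · rw [show ε + ind t (s j) + 1 + ind t (s j) = ε + 1 + (ind t (s j) + ind t (s j)) by ring,
        CharTwo.add_self_eq_zero, add_zero]

lemma sgn_mul_refl {t : W} (ht : cs.IsReflection t) (w : W) :
    sgn cs (w * t) t = sgn cs w t + 1 := by
  have h2 : phi cs (w * t) (t, 0) = (w * t * w⁻¹, sgn cs w t + 1) := by
    rw [map_mul]
    show phi cs w (phi cs t (t, 0)) = _
    rw [phi_refl_self cs ht, zero_add, phi_apply]
    rw [Prod.mk.injEq]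
    exact ⟨rfl, add_comm _ _⟩
  show (phi cs (w * t) (t, 0)).2 = _
  rw [h2]

lemma zmod2_cases (x : ZMod 2) : x = 0 ∨ x = 1 := by revert x; decide

/-- Strong exchange, right version: if `t` is a reflection with `ℓ(w t) < ℓ(w)`,
then `t` appears in the right inversion sequence of every word for `w`. -/
lemma strong_exchange_right {ω : List B} {t : W} (ht : cs.IsReflection t)
    (hlt : ℓ (π ω * t) < ℓ (π ω)) : t ∈ ris ω := by
  apply mem_ris_of_sgn_one
  set w := π ω with hw
  have hsg : sgn cs (w * t) t = 0 := by
    rcases zmod2_cases (sgn cs (w * t) t) with h | h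
    · exact h
    · exfalso
      obtain ⟨ω', hred, hw'⟩ := cs.exists_reduced_word' (w * t)
      rw [hw'] at h
      have hmem := mem_ris_of_sgn_one cs h
      have := (cs.isRightInversion_of_mem_rightInvSeq hred hmem).2
      rw [← hw'] at this
      have hwtt : w * t * t = w := by
        rw [mul_assoc, ht.mul_self, mul_one]
      rw [hwtt] at this
      omega
  have := sgn_mul_refl cs ht (w * t)
  rw [show w * t * t = w by rw [mul_assoc, ht.mul_self, mul_one], hsg] at this
  rw [this, zero_add]

/-- Strong exchange, left version. -/
lemma strong_exchange_left {ω : List B} {t : W} (ht : cs.IsReflection t)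
    (hlt : ℓ (t * π ω) < ℓ (π ω)) : t ∈ lis ω := by
  have h1 : ℓ (π ω.reverse * t) < ℓ (π ω.reverse) := by
    rw [cs.wordProd_reverse]
    have e1 : ℓ ((π ω)⁻¹ * t) = ℓ (t * π ω) := by
      rw [← cs.length_inv, mul_inv_rev, inv_inv, ht.inv]
    rw [e1, cs.length_inv]
    exact hlt
  have := strong_exchange_right cs ht h1
  rw [cs.rightInvSeq_reverse, List.mem_reverse] at this
  exact this

end CoxExchangeAux

open CoxExchangeAux

namespace CoxExchangeAux

variable {B W : Type*} [Group W] {M : CoxeterMatrix B} (cs : CoxeterSystem M W)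

local prefix:100 "s" => cs.simple
local prefix:100 "π" => cs.wordProd
local prefix:100 "ℓ" => cs.length
local prefix:100 "ris" => cs.rightInvSeq
local prefix:100 "lis" => cs.leftInvSeq

lemma wordProd_mem_parabolic {X : Set B} {ω : List B} (hω : ∀ b ∈ ω, b ∈ X) :
    π ω ∈ coxParabolic cs X := by
  induction ω with
  | nil => rw [cs.wordProd_nil]; exact one_mem _
  | cons i ω ih =>
    rw [cs.wordProd_cons]
    exact mul_mem (Subgroup.subset_closure ⟨i, hω i (List.mem_cons_self), rfl⟩)
      (ih fun b hb => hω b (List.mem_cons_of_mem i hb))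

lemma exists_word_of_mem_parabolic {X : Set B} {u : W} (hu : u ∈ coxParabolic cs X) :
    ∃ ω : List B, (∀ b ∈ ω, b ∈ X) ∧ π ω = u := by
  induction hu using Subgroup.closure_induction with
  | mem x hx =>
    obtain ⟨i, hi, rfl⟩ := hx
    exact ⟨[i], by simpa using hi, by simp [cs.wordProd_cons]⟩
  | one => exact ⟨[], by simp, cs.wordProd_nil⟩
  | mul x y hx hy ihx ihy =>
    obtain ⟨ω₁, h₁, rfl⟩ := ihx
    obtain ⟨ω₂, h₂, rfl⟩ := ihy
    exact ⟨ω₁ ++ ω₂, fun b hb => by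
      rcases List.mem_append.mp hb with h | h
      exacts [h₁ b h, h₂ b h], cs.wordProd_append ω₁ ω₂⟩
  | inv x hx ihx =>
    obtain ⟨ω, h, rfl⟩ := ihx
    exact ⟨ω.reverse, fun b hb => h b (List.mem_reverse.mp hb), cs.wordProd_reverse ω⟩

lemma exists_reduced_word_of_word :
    ∀ n (ω : List B), ω.length ≤ n → ∀ X : Set B, (∀ b ∈ ω, b ∈ X) →
      ∃ ω' : List B, (∀ b ∈ ω', b ∈ X) ∧ cs.IsReduced ω' ∧ π ω' = π ω := by
  intro n
  induction n with
  | zero =>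
    intro ω hlen X hX
    rw [Nat.le_zero, List.length_eq_zero_iff] at hlen
    subst hlen
    exact ⟨[], by simp, by simp [CoxeterSystem.IsReduced], rfl⟩
  | succ n ih =>
    intro ω hlen X hX
    by_cases hred : cs.IsReduced ω
    · exact ⟨ω, hX, hred, rfl⟩
    -- find an index where the length drops
    have hexists : ∃ j, j < ω.length ∧ ℓ (π (ω.take (j+1))) < ℓ (π (ω.take j)) := by
      by_contra hno
      push_neg at hno
      apply hred
      have key : ∀ k, k ≤ ω.length → ℓ (π (ω.take k)) = k := by
        intro k
        induction k with
        | zero => simp [cs.wordProd_nil]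
        | succ k ihk =>
          intro hk
          have hk' : k < ω.length := hk
          have htake : ω.take (k+1) = ω.take k ++ [ω[k]] := by
            rw [List.take_succ, List.getElem?_eq_getElem hk']
            rfl
          have : π (ω.take (k+1)) = π (ω.take k) * s (ω[k]) := by
            rw [htake, cs.wordProd_append]
            simp [cs.wordProd_cons]
          rcases cs.length_mul_simple (π (ω.take k)) (ω[k]) with h | h
          · rw [this, h, ihk (le_of_lt hk')]
          · exfalso
            have hlow := hno k hk'
            rw [this] at hlow
            omega
      have := key ω.length le_rfl
      rwa [List.take_length] at this
    obtain ⟨j, hj, hdrop⟩ := hexists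
    -- exchange
    have htake : π (ω.take (j+1)) = π (ω.take j) * s (ω[j]) := by
      rw [List.take_succ, List.getElem?_eq_getElem hj, cs.wordProd_append]
      simp [cs.wordProd_cons]
    rw [htake] at hdrop
    have hmem : s (ω[j]) ∈ ris (ω.take j) :=
      strong_exchange_right cs (cs.isReflection_simple _) hdrop
    obtain ⟨k, hk, hkeq⟩ := List.mem_iff_getElem.mp hmem
    have hklen : k < (ω.take j).length := by rwa [cs.length_rightInvSeq] at hk
    have hkj : k < j := by rw [List.length_take] at hklen; omega
    have herase : π (ω.take j) * s (ω[j]) = π ((ω.take j).eraseIdx k) := by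
      rw [← cs.wordProd_mul_getD_rightInvSeq (ω.take j) k]
      congr 1
      rw [List.getD_eq_getElem _ 1 (by rwa [cs.length_rightInvSeq]), hkeq]
    -- the new shorter word
    set ω₂ := (ω.take j).eraseIdx k ++ ω.drop (j+1) with hω₂
    have hprod : π ω₂ = π ω := by
      have hsplit : ω = ω.take j ++ ω[j] :: ω.drop (j+1) := by
        conv_lhs => rw [← List.take_append_drop j ω]
        congr 1
        exact (List.drop_eq_getElem_cons hj).symm ▸ rfl
      rw [hω₂, cs.wordProd_append]
      conv_rhs => rw [hsplit]
      rw [cs.wordProd_append, cs.wordProd_cons, ← herase]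
      group
    have hlen₂ : ω₂.length ≤ n := by
      have h1 : ((ω.take j).eraseIdx k).length = j - 1 := by
        rw [List.length_eraseIdx, if_pos hklen, List.length_take]
        omega
      have h2 : (ω.drop (j+1)).length = ω.length - (j+1) := List.length_drop
      rw [hω₂, List.length_append, h1, h2]
      omega
    have hX₂ : ∀ b ∈ ω₂, b ∈ X := by
      intro b hb
      rcases List.mem_append.mp hb with h | h
      · exact hX b (List.mem_of_mem_take ((List.eraseIdx_sublist _ k).mem h))
      · exact hX b (List.mem_of_mem_drop h)
    obtain ⟨ω', hX', hred', hprod'⟩ := ih ω₂ hlen₂ X hX₂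
    exact ⟨ω', hX', hred', by rw [hprod', hprod]⟩

lemma exists_reduced_word_of_mem_parabolic {X : Set B} {u : W} (hu : u ∈ coxParabolic cs X) :
    ∃ ω : List B, (∀ b ∈ ω, b ∈ X) ∧ cs.IsReduced ω ∧ π ω = u := by
  obtain ⟨ω, hX, rfl⟩ := exists_word_of_mem_parabolic cs hu
  exact exists_reduced_word_of_word cs ω.length ω le_rfl X hX

/-- Key length additivity for a minimal double coset representative. -/
lemma length_add_of_min {X : Set B} {w₀ : W}
    (hmin : ∀ u ∈ coxParabolic cs X, ℓ w₀ ≤ ℓ (u * w₀)) :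
    ∀ u ∈ coxParabolic cs X, ℓ (u * w₀) = ℓ u + ℓ w₀ := by
  intro u hu
  obtain ⟨ω, hX, hred, rfl⟩ := exists_reduced_word_of_mem_parabolic cs hu
  clear hu
  induction ω with
  | nil => simp [cs.wordProd_nil]
  | cons i ω ih =>
    have hredω : cs.IsReduced ω := by
      have := hred.drop 1
      simpa using this
    have hXω : ∀ b ∈ ω, b ∈ X := fun b hb => hX b (List.mem_cons_of_mem i hb)
    have ihω := ih hXω hredω
    rw [cs.wordProd_cons, mul_assoc]
    rcases cs.length_simple_mul (π ω * w₀) i with h | h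
    · rw [h, ihω]
      have h1 : ℓ (π (i :: ω)) = ℓ (π ω) + 1 := by
        rw [hred, hredω, List.length_cons]
      rw [cs.wordProd_cons] at h1
      omega
    · -- impossible case
      exfalso
      obtain ⟨ω₀, hredω₀, hw₀⟩ := cs.exists_reduced_word' w₀
      have hcomb : π ω * w₀ = π (ω ++ ω₀) := by
        rw [cs.wordProd_append, hw₀]
      have hlt : ℓ (s i * π (ω ++ ω₀)) < ℓ (π (ω ++ ω₀)) := by
        rw [← hcomb]
        omega
      have hmem := strong_exchange_left cs (cs.isReflection_simple i) hlt
      obtain ⟨k, hk, hkeq⟩ := List.mem_iff_getElem.mp hmem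
      rw [cs.length_leftInvSeq, List.length_append] at hk
      have herase : s i * π (ω ++ ω₀) = π ((ω ++ ω₀).eraseIdx k) := by
        rw [← cs.getD_leftInvSeq_mul_wordProd (ω ++ ω₀) k]
        congr 1
        rw [List.getD_eq_getElem _ 1 (by rwa [cs.length_leftInvSeq, List.length_append]), hkeq]
      by_cases hkω : k < ω.length
      · -- erased inside ω : contradicts reducedness of i :: ω
        have herase' : s i * π ω * w₀ = π (ω.eraseIdx k) * w₀ := by
          rw [mul_assoc, hcomb, herase, List.eraseIdx_append_of_lt_length hkω,
            cs.wordProd_append, ← hw₀]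
        have : s i * π ω = π (ω.eraseIdx k) := mul_right_cancel herase'
        have hle : ℓ (s i * π ω) ≤ (ω.eraseIdx k).length := by
          rw [this]; exact cs.length_wordProd_le _
        have hlen : (ω.eraseIdx k).length = ω.length - 1 := by
          rw [List.length_eraseIdx, if_pos hkω]
        have hfull : ℓ (s i * π ω) = ω.length + 1 := by
          have := hred
          rw [CoxeterSystem.IsReduced, cs.wordProd_cons, List.length_cons] at this
          exact this
        omega
      · -- erased inside ω₀ : contradicts minimality
        push_neg at hkω
        set w₁ := π (ω₀.eraseIdx (k - ω.length)) with hw₁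
        have herase' : s i * (π ω * w₀) = π ω * w₁ := by
          rw [hcomb, herase, List.eraseIdx_append_of_length_le hkω, cs.wordProd_append, hw₁]
        have huk : (π ω)⁻¹ * s i * π ω * w₀ = w₁ := by
          rw [show (π ω)⁻¹ * s i * π ω * w₀ = (π ω)⁻¹ * (s i * (π ω * w₀)) by group, herase']
          group
        have humem : (π ω)⁻¹ * s i * π ω ∈ coxParabolic cs X := by
          refine mul_mem (mul_mem (inv_mem ?_) ?_) ?_
          · exact wordProd_mem_parabolic cs hXω
          · exact Subgroup.subset_closure ⟨i, hX i (List.mem_cons_self), rfl⟩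
          · exact wordProd_mem_parabolic cs hXω
        have hminw₁ := hmin _ humem
        rw [huk] at hminw₁
        have hlenw₁ : ℓ w₁ ≤ (ω₀.eraseIdx (k - ω.length)).length := cs.length_wordProd_le _
        have hlenw₀ : ℓ w₀ = ω₀.length := by rw [hw₀]; exact hredω₀
        have hkub : k - ω.length < ω₀.length := by omega
        have : (ω₀.eraseIdx (k - ω.length)).length = ω₀.length - 1 := by
          rw [List.length_eraseIdx, if_pos hkub]
        omega

end CoxExchangeAux

/-- If `w₀` is `(X,Y)`-minimal and `w₀ W_Y w₀⁻¹ ⊆ W_X`, then conjugation by `w₀` sends each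
generator `s_y` (`y ∈ Y`) to a generator `s_x` with `x ∈ X`. -/
theorem min_conj_simple_mem {B W : Type*} [Group W] {M : CoxeterMatrix B}
    (cs : CoxeterSystem M W) (X Y : Set B) (w₀ : W)
    (hmin : ∀ u₁ ∈ coxParabolic cs X, ∀ u₂ ∈ coxParabolic cs Y,
      cs.length w₀ ≤ cs.length (u₁ * w₀ * u₂))
    (hconj : ∀ u ∈ coxParabolic cs Y, w₀ * u * w₀⁻¹ ∈ coxParabolic cs X) :
    ∀ y ∈ Y, ∃ x ∈ X, w₀ * cs.simple y * w₀⁻¹ = cs.simple x := by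
  intro y hy
  have hsy : cs.simple y ∈ coxParabolic cs Y :=
    Subgroup.subset_closure ⟨y, hy, rfl⟩
  set t := w₀ * cs.simple y * w₀⁻¹ with ht
  have htmem : t ∈ coxParabolic cs X := hconj _ hsy
  have hmin' : ∀ u ∈ coxParabolic cs X, cs.length w₀ ≤ cs.length (u * w₀) := by
    intro u hu
    have := hmin u hu 1 (one_mem _)
    rwa [mul_one] at this
  -- length of w₀ * s y
  have h1 : cs.length (w₀ * cs.simple y) = cs.length w₀ + 1 := by
    rcases cs.length_mul_simple w₀ y with h | h
    · exact h
    · exfalso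
      have := hmin 1 (one_mem _) (cs.simple y) hsy
      rw [one_mul] at this
      omega
  have h2 : t * w₀ = w₀ * cs.simple y := by rw [ht]; group
  have h3 : cs.length (t * w₀) = cs.length t + cs.length w₀ :=
    CoxExchangeAux.length_add_of_min cs hmin' t htmem
  have h4 : cs.length t = 1 := by
    rw [h2, h1] at h3
    omega
  obtain ⟨ω, hX, hred, hprod⟩ :=
    CoxExchangeAux.exists_reduced_word_of_mem_parabolic cs htmem
  have hlen : ω.length = 1 := by
    rw [← hred, hprod, h4]
  match ω, hlen with
  | [x], _ =>
    refine ⟨x, hX x (List.mem_cons_self), ?_⟩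
    rw [← hprod, cs.wordProd_cons, cs.wordProd_nil, mul_one]
end
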